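/- Let (a,b) ∈ {(2,0), (2,2)} ⊆ (ℤ/4ℤ)², i.e., θ = a + bw ∈ {2, 2+2w}, and R = R_θ, and let n ≥ 1. Let v ∈ Rⁿ be any vector with vᵢ ∈ {2, 2+2w} for every i, and let C := R·v = {r·v : r ∈ R} be the linear code generated by v. Then C has exactly 4 elements, and d_G(Φ(x), Φ(y)) = 2n for all distinct x, y ∈ C; in particular C attains the Plotkin-like bound with equality, since with d = 2n one has |C| = 4 = ⌊2d/(2d − 3n)⌋. -/

import Mathlib

open Polynomial

/-- The base ring ℤ/4ℤ. -/
abbrev Z4 := ZMod 4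

/-- The polynomial X² − (a + bX) over ℤ/4ℤ. -/
noncomputable def wPoly (a b : Z4) : Z4[X] := X ^ 2 - (C b * X + C a)

/-- The ring R_{a+bw} = (ℤ/4ℤ)[X]/(X² − (a + bX)); every element is uniquely
x₀ + x₁·w with x₀, x₁ ∈ ℤ/4ℤ, and w² = a + b·w. -/
abbrev Rw (a b : Z4) : Type := AdjoinRoot (wPoly a b)

/-- The element w of R_{a+bw}. -/
noncomputable def ww (a b : Z4) : Rw a b := AdjoinRoot.root _

instance (a b : Z4) : Nonempty (Rw a b) := ⟨0⟩

/-- The Gau map expressed on coordinates:  ψ(x₀, x₁) is the DNA pair (in Fin 4 × Fin 4,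
with A,G,C,T encoded as 0,1,2,3) assigned to the ring element x₀ + x₁·w. -/
def psi (p : Z4 × Z4) : Fin 4 × Fin 4 :=
  match p.1.val, p.2.val with
  | 0, 0 => (3, 3)
  | 1, 0 => (0, 1)
  | 2, 0 => (2, 2)
  | 3, 0 => (1, 0)
  | 0, 1 => (0, 2)
  | 1, 1 => (0, 3)
  | 2, 1 => (1, 3)
  | 3, 1 => (1, 2)
  | 0, 2 => (1, 1)
  | 1, 2 => (2, 3)
  | 2, 2 => (0, 0)
  | 3, 2 => (3, 2)
  | 0, 3 => (2, 0)
  | 1, 3 => (2, 1)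
  | 2, 3 => (3, 1)
  | _, _ => (3, 0)

/-- `phi` is a Gau map on R_{a+bw}: on the element x₀ + x₁·w it takes the value
prescribed by the table ψ. -/
def IsGauMap (a b : Z4) (phi : Rw a b → Fin 4 × Fin 4) : Prop :=
  ∀ x₀ x₁ : Z4,
    phi (algebraMap Z4 (Rw a b) x₀ + algebraMap Z4 (Rw a b) x₁ * ww a b) = psi (x₀, x₁)

/-- Coordinatewise extension Φ of a Gau map φ to vectors. -/
def PhiV (a b : Z4) (phi : Rw a b → Fin 4 × Fin 4) (n : ℕ) (x : Fin n → Rw a b) :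
    Fin n → Fin 4 × Fin 4 :=
  fun j => phi (x j)

/-- Inverse Φ⁻¹ of the coordinatewise extension of a Gau map. -/
noncomputable def PhiVinv (a b : Z4) (phi : Rw a b → Fin 4 × Fin 4) (n : ℕ)
    (y : Fin n → Fin 4 × Fin 4) : Fin n → Rw a b :=
  fun j => Function.invFun phi (y j)

/-- DNA-string reversal y ↦ y^R on Σⁿ: read the length-2n DNA string backwards,
i.e. reverse the order of the pairs and swap the two entries of each pair. -/
def dnaRev (n : ℕ) (y : Fin n → Fin 4 × Fin 4) : Fin n → Fin 4 × Fin 4 :=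
  fun j => ((y j.rev).2, (y j.rev).1)

/-- Watson–Crick complement y ↦ y^C on Σⁿ. -/
def dnaCompl (n : ℕ) (y : Fin n → Fin 4 × Fin 4) : Fin n → Fin 4 × Fin 4 :=
  fun j => (3 - (y j).1, 3 - (y j).2)

/-- Vector reversal g ↦ g^r on Rⁿ. -/
def vecRev {α : Type*} (n : ℕ) (x : Fin n → α) : Fin n → α :=
  fun j => x j.rev

/-- The Gau distance on Σⁿ. -/
def dG (n : ℕ) (x y : Fin n → Fin 4 × Fin 4) : ℕ :=
  ∑ j, ((if (x j).1 = (y j).1 then 0 else 1) + (if (x j).2 = (y j).2 then 0 else 1))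

section Aux
instance : Nontrivial Z4 := ⟨0, 1, by decide⟩

lemma deg_lin_lt (a b : Z4) : (C b * X + C a).degree < ((2 : ℕ) : WithBot ℕ) :=
  lt_of_le_of_lt Polynomial.degree_linear_le (by exact_mod_cast one_lt_two)

lemma monic_wPoly (a b : Z4) : (wPoly a b).Monic := by
  have := Polynomial.monic_X_pow_sub (p := C b * X + C a) (n := 2) (deg_lin_lt a b)
  simpa [wPoly] using this

lemma degree_wPoly (a b : Z4) : (wPoly a b).degree = 2 := by
  have hlt : (C b * X + C a).degree < (X ^ 2 : Z4[X]).degree := by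
    rw [Polynomial.degree_X_pow]; exact deg_lin_lt a b
  rw [wPoly, Polynomial.degree_sub_eq_left_of_degree_lt hlt, Polynomial.degree_X_pow]
  rfl

lemma ww_sq (a b : Z4) : ww a b * ww a b =
    algebraMap Z4 (Rw a b) a + algebraMap Z4 (Rw a b) b * ww a b := by
  have h : AdjoinRoot.mk (wPoly a b) (X ^ 2 - (C b * X + C a)) = 0 := AdjoinRoot.mk_self
  simp only [map_sub, map_add, map_mul, map_pow, AdjoinRoot.mk_X, AdjoinRoot.mk_C] at h
  unfold ww
  rw [AdjoinRoot.algebraMap_eq]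
  linear_combination h

lemma rep_aux (a b : Z4) (r : Rw a b) :
    ∃ x₀ x₁ : Z4, r = algebraMap Z4 (Rw a b) x₀ + algebraMap Z4 (Rw a b) x₁ * ww a b := by
  obtain ⟨p, rfl⟩ := AdjoinRoot.mk_surjective r
  refine ⟨(p %ₘ wPoly a b).coeff 0, (p %ₘ wPoly a b).coeff 1, ?_⟩
  have hm := monic_wPoly a b
  have key : AdjoinRoot.mk (wPoly a b) p = AdjoinRoot.mk (wPoly a b) (p %ₘ wPoly a b) := by
    conv_lhs => rw [← Polynomial.modByMonic_add_div p (wPoly a b)]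
    simp [map_add, map_mul, AdjoinRoot.mk_self]
  have hdeg : (p %ₘ wPoly a b).degree ≤ 1 := by
    have h := Polynomial.degree_modByMonic_lt p hm
    rw [degree_wPoly] at h
    exact Order.lt_succ_iff.mp (by exact_mod_cast h)
  have hrep := Polynomial.eq_X_add_C_of_degree_le_one hdeg
  rw [key]
  conv_lhs => rw [hrep]
  rw [map_add, map_mul, AdjoinRoot.mk_X, AdjoinRoot.mk_C, AdjoinRoot.mk_C]
  unfold ww
  rw [← AdjoinRoot.algebraMap_eq]
  ring

lemma four_zero (a b : Z4) : (4 : Rw a b) = 0 := by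
  calc (4 : Rw a b) = algebraMap Z4 (Rw a b) (4 : Z4) := (map_ofNat _ 4).symm
    _ = algebraMap Z4 (Rw a b) 0 := by rw [show (4:Z4) = 0 from by decide]
    _ = 0 := map_zero _

lemma two_ww_sq (a b : Z4) (hab : (a = 2 ∧ b = 0) ∨ (a = 2 ∧ b = 2)) :
    (2 : Rw a b) * (ww a b * ww a b) = 0 := by
  have h4 := four_zero a b
  rw [ww_sq]
  rcases hab with ⟨rfl, rfl⟩ | ⟨rfl, rfl⟩
  · simp only [map_ofNat, map_zero]
    linear_combination h4
  · simp only [map_ofNat]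
    linear_combination (1 + ww 2 2) * h4

lemma mul_two_form (a b : Z4) (x₀ x₁ : Z4) :
    (algebraMap Z4 (Rw a b) x₀ + algebraMap Z4 (Rw a b) x₁ * ww a b) * 2 =
      algebraMap Z4 (Rw a b) (2 * x₀) + algebraMap Z4 (Rw a b) (2 * x₁) * ww a b := by
  simp only [map_mul, map_ofNat]
  ring

lemma mul_theta_form (a b : Z4) (hab : (a = 2 ∧ b = 0) ∨ (a = 2 ∧ b = 2)) (x₀ x₁ : Z4) :
    (algebraMap Z4 (Rw a b) x₀ + algebraMap Z4 (Rw a b) x₁ * ww a b) * (2 + 2 * ww a b) =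
      algebraMap Z4 (Rw a b) (2 * x₀) +
        algebraMap Z4 (Rw a b) (2 * x₀ + 2 * x₁) * ww a b := by
  have h := two_ww_sq a b hab
  simp only [map_mul, map_add, map_ofNat]
  linear_combination (algebraMap Z4 (Rw a b) x₁) * h
end Aux

/-- for θ = a + bw ∈ {2, 2+2w} and v ∈ Rⁿ with every entry in {2, 2+2w},
the linear code C = R·v has exactly 4 elements, any two distinct codewords are at Gau
distance exactly 2n, and C attains the Plotkin-like bound with equality: with d = 2n,
|C| = 4 = ⌊2d/(2d − 3n)⌋. -/
theorem plotkin_optimal_code (a b : Z4) (hab : (a = 2 ∧ b = 0) ∨ (a = 2 ∧ b = 2))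
    (n : ℕ) (hn : 1 ≤ n)
    (phi : Rw a b → Fin 4 × Fin 4) (hphi : IsGauMap a b phi)
    (v : Fin n → Rw a b) (hv : ∀ i, v i = 2 ∨ v i = 2 + 2 * ww a b) :
    Set.ncard {x : Fin n → Rw a b | ∃ r : Rw a b, x = r • v} = 4 ∧
    (∀ x ∈ {x : Fin n → Rw a b | ∃ r : Rw a b, x = r • v},
      ∀ y ∈ {x : Fin n → Rw a b | ∃ r : Rw a b, x = r • v},
        x ≠ y → dG n (PhiV a b phi n x) (PhiV a b phi n y) = 2 * n) ∧
    2 * (2 * n) / (2 * (2 * n) - 3 * n) = 4 := by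
  classical
  have hform : ∀ j : Fin n,
      (∀ x₀ x₁ : Z4, (algebraMap Z4 (Rw a b) x₀ + algebraMap Z4 (Rw a b) x₁ * ww a b) * v j =
        algebraMap Z4 (Rw a b) (2 * x₀) + algebraMap Z4 (Rw a b) (2 * x₁) * ww a b) ∨
      (∀ x₀ x₁ : Z4, (algebraMap Z4 (Rw a b) x₀ + algebraMap Z4 (Rw a b) x₁ * ww a b) * v j =
        algebraMap Z4 (Rw a b) (2 * x₀) + algebraMap Z4 (Rw a b) (2 * x₀ + 2 * x₁) * ww a b) := by
    intro j
    rcases hv j with h | h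
    · exact Or.inl fun x₀ x₁ => by rw [h]; exact mul_two_form a b x₀ x₁
    · exact Or.inr fun x₀ x₁ => by rw [h]; exact mul_theta_form a b hab x₀ x₁
  set cwf : Z4 → Z4 → (Fin n → Rw a b) :=
    fun p q => (algebraMap Z4 (Rw a b) p + algebraMap Z4 (Rw a b) q * ww a b) • v with hcwf
  have hcoord : ∀ p q : Z4, ∀ j : Fin n,
      cwf p q j = (algebraMap Z4 (Rw a b) p + algebraMap Z4 (Rw a b) q * ww a b) * v j :=
    fun p q j => rfl
  have hphiC : ∀ j : Fin n,
      (∀ p q : Z4, phi (cwf p q j) = psi (2 * p, 2 * q)) ∨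
      (∀ p q : Z4, phi (cwf p q j) = psi (2 * p, 2 * p + 2 * q)) := by
    intro j
    rcases hform j with h | h
    · exact Or.inl fun p q => by rw [hcoord, h p q, hphi (2*p) (2*q)]
    · exact Or.inr fun p q => by rw [hcoord, h p q, hphi (2*p) (2*p+2*q)]
  have key1 : ∀ s t s' t' : Z4, ¬(2*s = 2*s' ∧ 2*t = 2*t') →
      (psi (2*s, 2*t)).1 ≠ (psi (2*s', 2*t')).1 ∧ (psi (2*s, 2*t)).2 ≠ (psi (2*s', 2*t')).2 := by
    decide
  have key2 : ∀ s t s' t' : Z4, ¬(2*s = 2*s' ∧ 2*t = 2*t') →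
      (psi (2*s, 2*s+2*t)).1 ≠ (psi (2*s', 2*s'+2*t')).1 ∧
      (psi (2*s, 2*s+2*t)).2 ≠ (psi (2*s', 2*s'+2*t')).2 := by
    decide
  have hdiff : ∀ p q p' q' : Z4, ¬(2*p = 2*p' ∧ 2*q = 2*q') → ∀ j : Fin n,
      (phi (cwf p q j)).1 ≠ (phi (cwf p' q' j)).1 ∧
      (phi (cwf p q j)).2 ≠ (phi (cwf p' q' j)).2 := by
    intro p q p' q' h j
    rcases hphiC j with hc | hc
    · rw [hc p q, hc p' q']; exact key1 p q p' q' h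
    · rw [hc p q, hc p' q']; exact key2 p q p' q' h
  have heqv : ∀ p q p' q' : Z4, 2*p = 2*p' → 2*q = 2*q' → cwf p q = cwf p' q' := by
    intro p q p' q' h1 h2
    funext j
    rcases hform j with h | h
    · rw [hcoord, hcoord, h p q, h p' q', h1, h2]
    · rw [hcoord, hcoord, h p q, h p' q', h1, h2]
  have hne : ∀ p q p' q' : Z4, ¬(2*p = 2*p' ∧ 2*q = 2*q') → cwf p q ≠ cwf p' q' := by
    intro p q p' q' h heq
    exact (hdiff p q p' q' h ⟨0, hn⟩).1 (by rw [heq])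
  have hSet : {x : Fin n → Rw a b | ∃ r : Rw a b, x = r • v} =
      {cwf 0 0, cwf 1 0, cwf 0 1, cwf 1 1} := by
    ext x
    simp only [Set.mem_setOf_eq, Set.mem_insert_iff, Set.mem_singleton_iff]
    constructor
    · rintro ⟨r, rfl⟩
      obtain ⟨x₀, x₁, rfl⟩ := rep_aux a b r
      have h0 : ∀ z : Z4, 2*z = 2*0 ∨ 2*z = 2*1 := by decide
      have hx : (algebraMap Z4 (Rw a b) x₀ + algebraMap Z4 (Rw a b) x₁ * ww a b) • v
          = cwf x₀ x₁ := rfl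
      rcases h0 x₀ with h1 | h1 <;> rcases h0 x₁ with h2 | h2
      · exact Or.inl (hx.trans (heqv x₀ x₁ 0 0 h1 h2))
      · exact Or.inr (Or.inr (Or.inl (hx.trans (heqv x₀ x₁ 0 1 h1 h2))))
      · exact Or.inr (Or.inl (hx.trans (heqv x₀ x₁ 1 0 h1 h2)))
      · exact Or.inr (Or.inr (Or.inr (hx.trans (heqv x₀ x₁ 1 1 h1 h2))))
    · rintro (rfl | rfl | rfl | rfl)
      · exact ⟨_, rfl⟩
      · exact ⟨_, rfl⟩
      · exact ⟨_, rfl⟩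
      · exact ⟨_, rfl⟩
  refine ⟨?_, ?_, ?_⟩
  · rw [hSet]
    rw [Set.ncard_insert_of_notMem (by
        simp only [Set.mem_insert_iff, Set.mem_singleton_iff]
        push_neg
        exact ⟨hne 0 0 1 0 (by decide), hne 0 0 0 1 (by decide), hne 0 0 1 1 (by decide)⟩)
      (Set.toFinite _)]
    rw [Set.ncard_insert_of_notMem (by
        simp only [Set.mem_insert_iff, Set.mem_singleton_iff]
        push_neg
        exact ⟨hne 1 0 0 1 (by decide), hne 1 0 1 1 (by decide)⟩) (Set.toFinite _)]
    rw [Set.ncard_pair (hne 0 1 1 1 (by decide))]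
  · rintro x ⟨r, rfl⟩ y ⟨s, rfl⟩ hxy
    obtain ⟨x₀, x₁, rfl⟩ := rep_aux a b r
    obtain ⟨y₀, y₁, rfl⟩ := rep_aux a b s
    have hx : (algebraMap Z4 (Rw a b) x₀ + algebraMap Z4 (Rw a b) x₁ * ww a b) • v
        = cwf x₀ x₁ := rfl
    have hy : (algebraMap Z4 (Rw a b) y₀ + algebraMap Z4 (Rw a b) y₁ * ww a b) • v
        = cwf y₀ y₁ := rfl
    have hlab : ¬(2*x₀ = 2*y₀ ∧ 2*x₁ = 2*y₁) := by
      rintro ⟨h1, h2⟩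
      exact hxy (hx.trans ((heqv x₀ x₁ y₀ y₁ h1 h2).trans hy.symm))
    have hterm : ∀ j : Fin n,
        ((if (PhiV a b phi n (cwf x₀ x₁) j).1 = (PhiV a b phi n (cwf y₀ y₁) j).1 then 0 else 1) +
         (if (PhiV a b phi n (cwf x₀ x₁) j).2 = (PhiV a b phi n (cwf y₀ y₁) j).2 then 0 else 1))
        = 2 := by
      intro j
      obtain ⟨h1, h2⟩ := hdiff x₀ x₁ y₀ y₁ hlab j
      simp only [PhiV]
      simp [h1, h2]
    rw [hx, hy, dG]
    calc (∑ j : Fin n, _) = ∑ _j : Fin n, 2 := Finset.sum_congr rfl fun j _ => hterm j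
      _ = 2 * n := by simp [Finset.sum_const, mul_comm]
  · have h3 : 2 * (2 * n) - 3 * n = n := by omega
    rw [h3, show 2 * (2 * n) = 4 * n from by ring, Nat.mul_div_cancel 4 (by omega)]
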